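/- Let ρ be a finite positive Borel measure on [0,∞). Then for every Schwartz function f on ℝ⁴, lim_{λ→0⁺} ∫_{[0,∞)} (∫_{ℝ³} f̂(√(|p|²+λ²m²), p)/√(|p|²+λ²m²) dp) dρ(m²) = ρ([0,∞)) · ∫_{ℝ³} f̂(|p|, p)/|p| dp, and this limit is finite. -/

import Mathlib

open MeasureTheory Filter Topology SchwartzMap
open scoped FourierTransform

/-- The point `(p₀, p) ∈ ℝ⁴` built from a time component `p0 ∈ ℝ` and a
space momentum `p ∈ ℝ³`. -/
noncomputable def timeSpace (p0 : ℝ) (p : EuclideanSpace ℝ (Fin 3)) :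
    EuclideanSpace ℝ (Fin 4) :=
  (EuclideanSpace.equiv (Fin 4) ℝ).symm (Fin.cons p0 (EuclideanSpace.equiv (Fin 3) ℝ p))

/-- The inner Källén–Lehmann momentum integral
`∫_{ℝ³} f̂(√(|p|²+m²), p)/√(|p|²+m²) dp` at squared mass `m2 = m²`,
where `f̂ = 𝓕 f` is the Fourier transform of `f`. -/
noncomputable def KLinner (f : EuclideanSpace ℝ (Fin 4) → ℂ) (m2 : ℝ) : ℂ :=
  ∫ p : EuclideanSpace ℝ (Fin 3),
    𝓕 f (timeSpace (Real.sqrt (‖p‖ ^ 2 + m2)) p) / (Real.sqrt (‖p‖ ^ 2 + m2) : ℂ)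

/-- The Källén–Lehmann two-point functional
`W_ρ(f) = ∫_{[0,∞)} (∫_{ℝ³} f̂(√(|p|²+m²), p)/√(|p|²+m²) dp) dρ(m²)`
associated with a spectral measure `ρ` on `[0,∞)`. -/
noncomputable def KL (ρ : Measure ℝ) (f : EuclideanSpace ℝ (Fin 4) → ℂ) : ℂ :=
  ∫ m2 in Set.Ici (0 : ℝ), KLinner f m2 ∂ρ

/-- The scaled Källén–Lehmann functional `W_{ρ,λ}(f) = λ⁻⁴ W_ρ(f(λ⁻¹ ·))`. -/
noncomputable def KLscaled (ρ : Measure ℝ) (lam : ℝ) (f : EuclideanSpace ℝ (Fin 4) → ℂ) : ℂ :=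
  (lam ^ (4 : ℕ) : ℝ)⁻¹ * KL ρ (fun x => f (lam⁻¹ • x))

/-! ### Auxiliary lemmas -/

lemma norm_timeSpace (p0 : ℝ) (p : EuclideanSpace ℝ (Fin 3)) :
    ‖timeSpace p0 p‖ = Real.sqrt (p0 ^ 2 + ‖p‖ ^ 2) := by
  have h1 : ‖p‖ ^ 2 = ∑ j : Fin 3, ‖p j‖ ^ 2 := by
    rw [EuclideanSpace.norm_eq, Real.sq_sqrt (by positivity)]
  rw [EuclideanSpace.norm_eq, h1]
  congr 1
  have h2 : ∀ i : Fin 4, (timeSpace p0 p) i = (Fin.cons p0 (fun j => p j) : Fin 4 → ℝ) i :=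
    fun _ => rfl
  simp_rw [h2]
  rw [Fin.sum_univ_succ]
  simp [Real.norm_eq_abs, sq_abs]

lemma norm_le_norm_timeSpace (p0 : ℝ) (p : EuclideanSpace ℝ (Fin 3)) :
    ‖p‖ ≤ ‖timeSpace p0 p‖ := by
  rw [norm_timeSpace]
  calc ‖p‖ = Real.sqrt (‖p‖ ^ 2) := (Real.sqrt_sq (norm_nonneg p)).symm
  _ ≤ _ := Real.sqrt_le_sqrt (by nlinarith [sq_nonneg p0])

lemma continuous_timeSpace :
    Continuous fun x : ℝ × EuclideanSpace ℝ (Fin 3) => timeSpace x.1 x.2 := by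
  unfold timeSpace
  refine ((EuclideanSpace.equiv (Fin 4) ℝ).symm.continuous).comp ?_
  refine continuous_pi fun i => ?_
  refine Fin.cases ?_ (fun j => ?_) i
  · simp only [Fin.cons_zero]
    exact continuous_fst
  · simp only [Fin.cons_succ]
    exact (continuous_apply j).comp
      ((EuclideanSpace.equiv (Fin 3) ℝ).continuous.comp continuous_snd)

lemma integrable_g1 :
    Integrable (Set.indicator (Set.Icc (-1:ℝ) 1) (fun t => |t| ^ (-(1/3) : ℝ))) := by
  rw [integrable_indicator_iff measurableSet_Icc]
  have h1 : IntervalIntegrable (fun t : ℝ => t ^ (-(1/3):ℝ)) volume 0 1 :=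
    intervalIntegral.intervalIntegrable_rpow' (by norm_num)
  have h2 : IntervalIntegrable (fun t : ℝ => |t| ^ (-(1/3):ℝ)) volume 0 1 := by
    rw [intervalIntegrable_iff] at h1 ⊢
    refine h1.congr_fun ?_ measurableSet_uIoc
    intro x hx
    rw [Set.uIoc_of_le (by norm_num : (0:ℝ) ≤ 1)] at hx
    simp [abs_of_pos hx.1]
  have h3 : IntervalIntegrable (fun t : ℝ => |t| ^ (-(1/3):ℝ)) volume (-1) 0 := by
    rw [IntervalIntegrable.iff_comp_neg]
    simpa [abs_neg] using h2.symm
  have h0 := h3.trans h2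
  have := (intervalIntegrable_iff_integrableOn_Ioc_of_le (by norm_num : (-1:ℝ) ≤ 1)).mp h0
  rwa [integrableOn_Icc_iff_integrableOn_Ioc]

lemma coord_le_norm (p : EuclideanSpace ℝ (Fin 3)) (j : Fin 3) : |p j| ≤ ‖p‖ := by
  rw [EuclideanSpace.norm_eq, ← Real.sqrt_sq_eq_abs]
  refine Real.sqrt_le_sqrt ?_
  have := Finset.single_le_sum (f := fun i => ‖p i‖ ^ 2)
    (fun i _ => by positivity) (Finset.mem_univ j)
  simpa [Real.norm_eq_abs, sq_abs] using this

lemma integrableOn_inv_norm_ball :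
    IntegrableOn (fun p : EuclideanSpace ℝ (Fin 3) => ‖p‖⁻¹) (Metric.ball 0 1) := by
  classical
  set g1 : ℝ → ℝ := Set.indicator (Set.Icc (-1:ℝ) 1) (fun t => |t| ^ (-(1/3) : ℝ)) with hg1def
  have hg1 : Integrable g1 := integrable_g1
  have hg1nonneg : ∀ t, 0 ≤ g1 t := by
    intro t
    refine Set.indicator_nonneg (fun x _ => ?_) t
    positivity
  rw [← integrable_indicator_iff (μ := volume) measurableSet_ball]
  have hmp := (EuclideanSpace.volume_preserving_symm_measurableEquiv_toLp (Fin 3))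
  rw [← MeasurePreserving.integrable_comp_emb hmp.symm (MeasurableEquiv.measurableEmbedding _)]
  have key : Integrable (fun q : Fin 3 → ℝ => ∏ j, g1 (q j)) :=
    Integrable.fintype_prod (fun _ => hg1)
  have hae : ∀ᵐ q : Fin 3 → ℝ, ∀ j, q j ≠ 0 := by
    rw [MeasureTheory.ae_all_iff]
    intro j
    exact MeasureTheory.Measure.ae_eval_ne _ j 0
  refine key.mono' ?_ ?_
  · refine AEStronglyMeasurable.comp_measurable ?_ (MeasurableEquiv.measurable _)
    refine (Measurable.aestronglyMeasurable ?_)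
    exact (measurable_norm.inv).indicator measurableSet_ball
  · filter_upwards [hae] with q hq
    set p : EuclideanSpace ℝ (Fin 3) := (MeasurableEquiv.toLp 2 (Fin 3 → ℝ)) q with hpdef
    have hpj : ∀ j, p j = q j := fun j => rfl
    have hprodnn : 0 ≤ ∏ j, g1 (q j) := Finset.prod_nonneg fun j _ => hg1nonneg _
    show ‖Set.indicator (Metric.ball 0 1) (fun p : EuclideanSpace ℝ (Fin 3) => ‖p‖⁻¹) p‖ ≤ _
    by_cases hp : p ∈ Metric.ball (0 : EuclideanSpace ℝ (Fin 3)) 1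
    · rw [Set.indicator_of_mem hp]
      have hball : ‖p‖ < 1 := by simpa [mem_ball_zero_iff] using hp
      have hqle : ∀ j, |q j| ≤ ‖p‖ := fun j => by rw [← hpj]; exact coord_le_norm p j
      have hqpos : ∀ j, 0 < |q j| := fun j => abs_pos.mpr (hq j)
      have hppos : 0 < ‖p‖ := lt_of_lt_of_le (hqpos 0) (hqle 0)
      have hg1q : ∀ j, g1 (q j) = |q j| ^ (-(1/3) : ℝ) := by
        intro j
        have : q j ∈ Set.Icc (-1:ℝ) 1 := by
          rw [Set.mem_Icc]
          exact abs_le.mp (le_of_lt (lt_of_le_of_lt (hqle j) hball))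
        rw [hg1def, Set.indicator_of_mem this]
      have hprod : ∏ j, |q j| ^ ((1/3) : ℝ) ≤ ‖p‖ := by
        calc ∏ j, |q j| ^ ((1/3) : ℝ) ≤ ∏ j : Fin 3, ‖p‖ ^ ((1/3) : ℝ) :=
              Finset.prod_le_prod (fun j _ => by positivity)
                (fun j _ => Real.rpow_le_rpow (abs_nonneg _) (hqle j) (by norm_num))
          _ = (‖p‖ ^ ((1/3) : ℝ)) ^ (3 : ℕ) := by
              simp [Finset.prod_const]
          _ = ‖p‖ := by
              rw [← Real.rpow_natCast (‖p‖ ^ ((1/3):ℝ)) 3, ← Real.rpow_mul hppos.le]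
              norm_num
      have hprodpos : 0 < ∏ j, |q j| ^ ((1/3) : ℝ) :=
        Finset.prod_pos fun j _ => Real.rpow_pos_of_pos (hqpos j) _
      have : ‖p‖⁻¹ ≤ (∏ j, |q j| ^ ((1/3) : ℝ))⁻¹ := by
        exact inv_anti₀ hprodpos hprod
      rw [Real.norm_eq_abs, abs_of_nonneg (inv_nonneg.mpr hppos.le)]
      refine this.trans (le_of_eq ?_)
      rw [← Finset.prod_inv_distrib]
      refine Finset.prod_congr rfl fun j _ => ?_
      rw [hg1q j, ← Real.rpow_neg (abs_nonneg _)]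
    · rw [Set.indicator_of_notMem hp]
      simpa using hprodnn

lemma integrable_D :
    Integrable (fun p : EuclideanSpace ℝ (Fin 3) => ((1 + ‖p‖) ^ 4 * ‖p‖)⁻¹) := by
  have hmeas : Measurable fun p : EuclideanSpace ℝ (Fin 3) => ((1 + ‖p‖) ^ 4 * ‖p‖)⁻¹ :=
    (((measurable_norm.const_add 1).pow_const 4).mul measurable_norm).inv
  have hDnn : ∀ p : EuclideanSpace ℝ (Fin 3), 0 ≤ ((1 + ‖p‖) ^ 4 * ‖p‖)⁻¹ := fun p => by positivity
  rw [← integrableOn_univ, ← Set.union_compl_self (Metric.ball (0:EuclideanSpace ℝ (Fin 3)) 1)]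
  refine IntegrableOn.union ?_ ?_
  · refine integrableOn_inv_norm_ball.mono' (hmeas.aestronglyMeasurable.restrict) ?_
    refine Filter.Eventually.of_forall fun p => ?_
    rw [Real.norm_eq_abs, abs_of_nonneg (hDnn p)]
    rcases eq_or_lt_of_le (norm_nonneg p) with h | h
    · simp [← h]
    · rw [mul_inv]
      calc ((1 + ‖p‖) ^ 4)⁻¹ * ‖p‖⁻¹ ≤ 1 * ‖p‖⁻¹ := by
            refine mul_le_mul_of_nonneg_right ?_ (inv_nonneg.mpr (norm_nonneg p))
            rw [inv_le_one_iff₀]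
            right
            exact one_le_pow₀ (by linarith [norm_nonneg p])
        _ = ‖p‖⁻¹ := one_mul _
  · have hint : Integrable (fun p : EuclideanSpace ℝ (Fin 3) => (1 + ‖p‖) ^ (-(4:ℝ))) := by
      refine integrable_one_add_norm ?_
      rw [finrank_euclideanSpace_fin]
      norm_num
    refine (hint.integrableOn).mono' (hmeas.aestronglyMeasurable.restrict) ?_
    filter_upwards [ae_restrict_mem measurableSet_ball.compl] with p hp
    have hp1 : 1 ≤ ‖p‖ := by
      simp only [Set.mem_compl_iff, Metric.mem_ball, dist_zero_right, not_lt] at hp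
      exact hp
    rw [Real.norm_eq_abs, abs_of_nonneg (hDnn p)]
    rw [Real.rpow_neg (by positivity), show ((4:ℝ)) = ((4:ℕ):ℝ) by norm_num, Real.rpow_natCast]
    refine inv_anti₀ (by positivity) ?_
    calc (1 + ‖p‖) ^ 4 = (1 + ‖p‖) ^ 4 * 1 := (mul_one _).symm
      _ ≤ (1 + ‖p‖) ^ 4 * ‖p‖ := by
          refine mul_le_mul_of_nonneg_left hp1 (by positivity)

lemma schwartz_decay4 (g : 𝓢(EuclideanSpace ℝ (Fin 4), ℂ)) :
    ∃ C : ℝ, 0 ≤ C ∧ ∀ x, ‖g x‖ * (1 + ‖x‖) ^ 4 ≤ C := by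
  refine ⟨2 ^ 4 * ((Finset.Iic ((4:ℕ),(0:ℕ))).sup (schwartzSeminormFamily ℝ (EuclideanSpace ℝ (Fin 4)) ℂ)) g,
    mul_nonneg (by norm_num) (apply_nonneg _ _), fun x => ?_⟩
  have h := SchwartzMap.one_add_le_sup_seminorm_apply (𝕜 := ℝ) (m := ((4:ℕ),(0:ℕ))) (k := 4) (n := 0) le_rfl le_rfl g x
  rw [norm_iteratedFDeriv_zero] at h
  calc ‖g x‖ * (1 + ‖x‖) ^ 4 = (1 + ‖x‖) ^ 4 * ‖g x‖ := mul_comm _ _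
    _ ≤ _ := h

/-- For a finite positive Borel measure `ρ` on `[0,∞)` and every Schwartz `f`
on ℝ⁴, as `λ → 0⁺` the bracketed term of the scaled Källén–Lehmann functional converges to
`ρ([0,∞)) · ∫_{ℝ³} f̂(|p|, p)/|p| dp` (a finite limit). -/
theorem kl_bracket_limit (ρ : Measure ℝ) [IsFiniteMeasure ρ]
    (f : 𝓢(EuclideanSpace ℝ (Fin 4), ℂ)) :
    Tendsto (fun lam : ℝ =>
        ∫ m2 in Set.Ici (0 : ℝ),
          (∫ p : EuclideanSpace ℝ (Fin 3),
            𝓕 (⇑f) (timeSpace (Real.sqrt (‖p‖ ^ 2 + lam ^ 2 * m2)) p) /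
              (Real.sqrt (‖p‖ ^ 2 + lam ^ 2 * m2) : ℂ)) ∂ρ)
      (𝓝[>] (0 : ℝ))
      (𝓝 (((ρ (Set.Ici 0)).toReal : ℂ) *
        ∫ p : EuclideanSpace ℝ (Fin 3), 𝓕 (⇑f) (timeSpace ‖p‖ p) / (‖p‖ : ℂ))) := by
  set g : 𝓢(EuclideanSpace ℝ (Fin 4), ℂ) := 𝓕 f with hgdef
  have hgco : 𝓕 (⇑f) = ⇑g := (SchwartzMap.fourier_coe f).symm
  rw [hgco]
  obtain ⟨C, hC0, hC⟩ := schwartz_decay4 g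
  set D : EuclideanSpace ℝ (Fin 3) → ℝ := fun p => C * ((1 + ‖p‖) ^ 4 * ‖p‖)⁻¹ with hDdef
  have hDint : Integrable D := integrable_D.const_mul C
  have hne0 : ∀ᵐ p : EuclideanSpace ℝ (Fin 3), p ≠ 0 := by
    rw [ae_iff]
    simp only [ne_eq, not_not, Set.setOf_eq_eq_singleton]
    exact measure_singleton 0
  -- the key pointwise bound
  have hbound : ∀ (a : ℝ) (p : EuclideanSpace ℝ (Fin 3)), 0 ≤ a → p ≠ 0 →
      ‖g (timeSpace (Real.sqrt (‖p‖ ^ 2 + a)) p) / ((Real.sqrt (‖p‖ ^ 2 + a) : ℝ) : ℂ)‖ ≤ D p := by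
    intro a p ha hp
    have hpnorm : (0:ℝ) < ‖p‖ := norm_pos_iff.mpr hp
    have hs0 : (0:ℝ) ≤ ‖p‖ ^ 2 + a := by positivity
    have hsq : ‖p‖ ≤ Real.sqrt (‖p‖ ^ 2 + a) := by
      rw [show ‖p‖ = Real.sqrt (‖p‖ ^ 2) from (Real.sqrt_sq (norm_nonneg p)).symm]
      exact Real.sqrt_le_sqrt (by nlinarith [Real.sqrt_sq (norm_nonneg p)])
    set x := timeSpace (Real.sqrt (‖p‖ ^ 2 + a)) p with hxdef
    have hxp : ‖p‖ ≤ ‖x‖ := norm_le_norm_timeSpace _ _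
    rw [norm_div, Complex.norm_real, Real.norm_eq_abs, abs_of_nonneg (Real.sqrt_nonneg _)]
    have h1 : ‖g x‖ ≤ C / (1 + ‖p‖) ^ 4 := by
      rw [le_div_iff₀ (by positivity)]
      calc ‖g x‖ * (1 + ‖p‖) ^ 4 ≤ ‖g x‖ * (1 + ‖x‖) ^ 4 := by
            refine mul_le_mul_of_nonneg_left ?_ (norm_nonneg _)
            exact pow_le_pow_left₀ (by positivity) (by linarith) 4
        _ ≤ C := hC x
    calc ‖g x‖ / Real.sqrt (‖p‖ ^ 2 + a) ≤ (C / (1 + ‖p‖) ^ 4) / ‖p‖ :=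
          div_le_div₀ (by positivity) h1 hpnorm hsq
      _ = D p := by
          rw [hDdef, div_div, div_eq_mul_inv]
  -- joint strong measurability
  have hsm : ∀ lam : ℝ, StronglyMeasurable
      (fun z : ℝ × EuclideanSpace ℝ (Fin 3) =>
        g (timeSpace (Real.sqrt (‖z.2‖ ^ 2 + lam ^ 2 * z.1)) z.2) /
          ((Real.sqrt (‖z.2‖ ^ 2 + lam ^ 2 * z.1) : ℝ) : ℂ)) := by
    intro lam
    have hsqrt : Continuous fun z : ℝ × EuclideanSpace ℝ (Fin 3) =>
        Real.sqrt (‖z.2‖ ^ 2 + lam ^ 2 * z.1) := by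
      refine Real.continuous_sqrt.comp ?_
      fun_prop
    have hnum : Continuous fun z : ℝ × EuclideanSpace ℝ (Fin 3) =>
        g (timeSpace (Real.sqrt (‖z.2‖ ^ 2 + lam ^ 2 * z.1)) z.2) :=
      g.continuous.comp (continuous_timeSpace.comp (hsqrt.prodMk continuous_snd))
    have hden : Continuous fun z : ℝ × EuclideanSpace ℝ (Fin 3) =>
        ((Real.sqrt (‖z.2‖ ^ 2 + lam ^ 2 * z.1) : ℝ) : ℂ) :=
      Complex.continuous_ofReal.comp hsqrt
    exact (hnum.measurable.div hden.measurable).stronglyMeasurable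
  -- slice measurability in p
  have hsm_p : ∀ (lam m2 : ℝ), AEStronglyMeasurable
      (fun p : EuclideanSpace ℝ (Fin 3) =>
        g (timeSpace (Real.sqrt (‖p‖ ^ 2 + lam ^ 2 * m2)) p) /
          ((Real.sqrt (‖p‖ ^ 2 + lam ^ 2 * m2) : ℝ) : ℂ)) volume := by
    intro lam m2
    exact ((hsm lam).comp_measurable
      (measurable_const.prodMk measurable_id)).aestronglyMeasurable
  -- inner convergence
  have hinner : ∀ m2 : ℝ, 0 ≤ m2 →
      Tendsto (fun lam : ℝ => ∫ p : EuclideanSpace ℝ (Fin 3),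
          g (timeSpace (Real.sqrt (‖p‖ ^ 2 + lam ^ 2 * m2)) p) /
            ((Real.sqrt (‖p‖ ^ 2 + lam ^ 2 * m2) : ℝ) : ℂ)) (𝓝[>] (0:ℝ))
        (𝓝 (∫ p : EuclideanSpace ℝ (Fin 3), g (timeSpace ‖p‖ p) / (‖p‖ : ℂ))) := by
    intro m2 hm2
    refine tendsto_integral_filter_of_dominated_convergence D ?_ ?_ hDint ?_
    · exact Filter.Eventually.of_forall fun lam => hsm_p lam m2
    · refine Filter.Eventually.of_forall fun lam => ?_
      filter_upwards [hne0] with p hp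
      exact hbound (lam ^ 2 * m2) p (by positivity) hp
    · filter_upwards [hne0] with p hp
      have hpn : (0:ℝ) < ‖p‖ := norm_pos_iff.mpr hp
      have h1 : Tendsto (fun lam : ℝ => ‖p‖ ^ 2 + lam ^ 2 * m2) (𝓝[>] (0:ℝ))
          (𝓝 (‖p‖ ^ 2)) := by
        have hc : Continuous fun lam : ℝ => ‖p‖ ^ 2 + lam ^ 2 * m2 := by fun_prop
        have := (hc.tendsto 0).mono_left (nhdsWithin_le_nhds (s := Set.Ioi (0:ℝ)))
        simpa using this
      have h2 : Tendsto (fun lam : ℝ => Real.sqrt (‖p‖ ^ 2 + lam ^ 2 * m2)) (𝓝[>] (0:ℝ))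
          (𝓝 ‖p‖) := by
        have := (Real.continuous_sqrt.tendsto (‖p‖ ^ 2)).comp h1
        rwa [Real.sqrt_sq (norm_nonneg p)] at this
      have hnum : Tendsto (fun lam : ℝ =>
          g (timeSpace (Real.sqrt (‖p‖ ^ 2 + lam ^ 2 * m2)) p)) (𝓝[>] (0:ℝ))
          (𝓝 (g (timeSpace ‖p‖ p))) := by
        have hts : Tendsto (fun lam : ℝ =>
            ((Real.sqrt (‖p‖ ^ 2 + lam ^ 2 * m2), p) : ℝ × EuclideanSpace ℝ (Fin 3)))
            (𝓝[>] (0:ℝ)) (𝓝 (‖p‖, p)) := h2.prodMk_nhds tendsto_const_nhds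
        exact (g.continuous.tendsto _).comp ((continuous_timeSpace.tendsto _).comp hts)
      have hden : Tendsto (fun lam : ℝ =>
          ((Real.sqrt (‖p‖ ^ 2 + lam ^ 2 * m2) : ℝ) : ℂ)) (𝓝[>] (0:ℝ)) (𝓝 ((‖p‖ : ℝ) : ℂ)) :=
        (Complex.continuous_ofReal.tendsto _).comp h2
      exact hnum.div hden (by exact_mod_cast hpn.ne')
  -- outer convergence
  have houter := tendsto_integral_filter_of_dominated_convergence
    (μ := ρ.restrict (Set.Ici 0)) (l := 𝓝[>] (0:ℝ))
    (F := fun lam m2 => ∫ p : EuclideanSpace ℝ (Fin 3),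
        g (timeSpace (Real.sqrt (‖p‖ ^ 2 + lam ^ 2 * m2)) p) /
          ((Real.sqrt (‖p‖ ^ 2 + lam ^ 2 * m2) : ℝ) : ℂ))
    (f := fun _ => ∫ p : EuclideanSpace ℝ (Fin 3), g (timeSpace ‖p‖ p) / (‖p‖ : ℂ))
    (bound := fun _ => ∫ p, D p)
    (by
      refine Filter.Eventually.of_forall fun lam => ?_
      exact ((hsm lam).integral_prod_right').aestronglyMeasurable)
    (by
      refine Filter.Eventually.of_forall fun lam => ?_
      filter_upwards [ae_restrict_mem measurableSet_Ici] with m2 hm2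
      refine norm_integral_le_of_norm_le hDint ?_
      filter_upwards [hne0] with p hp
      exact hbound (lam ^ 2 * m2) p (mul_nonneg (sq_nonneg lam) hm2) hp)
    (integrable_const _)
    (by
      filter_upwards [ae_restrict_mem measurableSet_Ici] with m2 hm2
      exact hinner m2 hm2)
  have hval : (∫ _ in Set.Ici (0:ℝ),
      (∫ p : EuclideanSpace ℝ (Fin 3), g (timeSpace ‖p‖ p) / (‖p‖ : ℂ)) ∂ρ) =
      ((ρ (Set.Ici 0)).toReal : ℂ) *
        ∫ p : EuclideanSpace ℝ (Fin 3), g (timeSpace ‖p‖ p) / (‖p‖ : ℂ) := by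
    rw [setIntegral_const, Complex.real_smul, Measure.real]
  rw [hval] at houter
  exact houter
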